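/- Let q ≥ 2. Every non-commutative subgroup K of the generalized quaternion group Q_{2^{q+1}} ⊆ SU(2) equals, as a set, μ_{2^r} ∪ w·ξ_{2^q}^p·μ_{2^r} (equivalently, K is the subgroup generated by ξ_{2^r} and w·ξ_{2^q}^p) for some r with 2 ≤ r ≤ q and some p with 0 ≤ p < 2^{q−r}. -/

import Mathlib

open Matrix Complex

noncomputable section

abbrev SU2 := Matrix.specialUnitaryGroup (Fin 2) ℂ

instance SU2.instGroup : Group SU2 :=
  { (inferInstance : Monoid SU2) with
    inv := fun A => ⟨star A.1, by
      rcases A.2 with ⟨hu, hd⟩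
      refine ⟨⟨?_, ?_⟩, ?_⟩
      · simpa using hu.2
      · simpa using hu.1
      · show (star A.1).det = 1
        rw [Matrix.star_eq_conjTranspose, Matrix.det_conjTranspose]
        simp [show A.1.det = 1 from hd]⟩
    inv_mul_cancel := fun A => Subtype.ext A.2.1.1 }

lemma w_mem : !![(0:ℂ), -1; 1, 0] ∈ Matrix.specialUnitaryGroup (Fin 2) ℂ := by
  rw [Matrix.mem_specialUnitaryGroup_iff, Matrix.mem_unitaryGroup_iff]
  constructor
  · ext i j
    fin_cases i <;> fin_cases j <;>
      simp [Matrix.mul_apply, Fin.sum_univ_two, Matrix.star_apply, Complex.star_def]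
  · simp [Matrix.det_fin_two]

def w : SU2 := ⟨!![(0:ℂ), -1; 1, 0], w_mem⟩

lemma xi_conj (m : ℕ) : (starRingEnd ℂ) (2 * Real.pi * Complex.I / m) =
    -(2 * Real.pi * Complex.I / m) := by
  simp [map_div₀, Complex.conj_I, Complex.conj_ofReal, map_ofNat]
  ring

lemma xi_conj_exp (m : ℕ) : (starRingEnd ℂ) (Complex.exp (2 * Real.pi * Complex.I / m)) =
    Complex.exp (-(2 * Real.pi * Complex.I / m)) := by
  rw [← Complex.exp_conj, xi_conj]

lemma xi_conj_exp' (m : ℕ) : (starRingEnd ℂ) (Complex.exp (-(2 * Real.pi * Complex.I / m))) =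
    Complex.exp (2 * Real.pi * Complex.I / m) := by
  rw [← Complex.exp_conj, map_neg, xi_conj, neg_neg]

lemma xi_mem (m : ℕ) :
    !![Complex.exp (2 * Real.pi * Complex.I / m), 0; 0,
       Complex.exp (-(2 * Real.pi * Complex.I / m))]
      ∈ Matrix.specialUnitaryGroup (Fin 2) ℂ := by
  rw [Matrix.mem_specialUnitaryGroup_iff, Matrix.mem_unitaryGroup_iff]
  have hstar : star (!![Complex.exp (2 * Real.pi * Complex.I / m), 0; 0,
       Complex.exp (-(2 * Real.pi * Complex.I / m))]) =
      !![Complex.exp (-(2 * Real.pi * Complex.I / m)), 0; 0,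
       Complex.exp (2 * Real.pi * Complex.I / m)] := by
    ext i j
    fin_cases i <;> fin_cases j <;>
      simp [Matrix.star_apply, Complex.star_def, xi_conj_exp m, xi_conj_exp' m]
  constructor
  · rw [hstar]
    ext i j
    fin_cases i <;> fin_cases j <;>
      simp [Matrix.mul_apply, Fin.sum_univ_two, ← Complex.exp_add]
  · simp [Matrix.det_fin_two, ← Complex.exp_add]

def ξ (m : ℕ) : SU2 :=
  ⟨!![Complex.exp (2 * Real.pi * Complex.I / m), 0; 0,
      Complex.exp (-(2 * Real.pi * Complex.I / m))], xi_mem m⟩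

/-- `μ m` : the cyclic subgroup of `SU2` generated by `ξ m`. -/
def μ (m : ℕ) : Subgroup SU2 := Subgroup.zpowers (ξ m)

/-- `genQ q` is the generalized quaternion group `Q_{2^{q+1}} ⊆ SU2`,
generated by `ξ_{2^q}` and `w`. -/
def genQ (q : ℕ) : Subgroup SU2 := Subgroup.closure {ξ (2 ^ q), w}

/-- Lower central series of a subgroup, as subgroups of the ambient group:
`lcs H k = Γ^{k+1}(H)`, so `lcs H 0 = Γ¹(H) = H` and `lcs H (k+1) = ⁅lcs H k, H⁆`. -/
def lcs {G : Type*} [Group G] (H : Subgroup G) : ℕ → Subgroup G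
  | 0 => H
  | (k + 1) => ⁅lcs H k, H⁆

/-- The set of diagonal matrices in `SU2`: the maximal torus `T`. -/
def Tset : Set SU2 :=
  {x | (x : Matrix (Fin 2) (Fin 2) ℂ) 0 1 = 0 ∧ (x : Matrix (Fin 2) (Fin 2) ℂ) 1 0 = 0}

/-- The set of anti-diagonal matrices in `SU2`: the coset `wT`. -/
def wTset : Set SU2 :=
  {x | (x : Matrix (Fin 2) (Fin 2) ℂ) 0 0 = 0 ∧ (x : Matrix (Fin 2) (Fin 2) ℂ) 1 1 = 0}

/-- `PU(2)`, the quotient of `SU(2)` by its center `{±I}`. -/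
abbrev PU2 := SU2 ⧸ Subgroup.center SU2


namespace Stmt9Aux

lemma coe_mul (A B : SU2) : ((A * B : SU2) : Matrix (Fin 2) (Fin 2) ℂ) = A.1 * B.1 := rfl

lemma coe_inv (A : SU2) : ((A⁻¹ : SU2) : Matrix (Fin 2) (Fin 2) ℂ) = star A.1 := rfl

lemma coe_one : ((1 : SU2) : Matrix (Fin 2) (Fin 2) ℂ) = 1 := rfl

lemma xi_pow (m : ℕ) (n : ℕ) : ((ξ m ^ n : SU2) : Matrix (Fin 2) (Fin 2) ℂ)
    = !![Complex.exp (n * (2 * Real.pi * Complex.I / m)), 0; 0,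
         Complex.exp (-(n * (2 * Real.pi * Complex.I / m)))] := by
  induction n with
  | zero =>
    rw [pow_zero, coe_one]
    rw [Matrix.one_fin_two]
    norm_num
  | succ k ih =>
    rw [pow_succ, coe_mul, ih]
    show _ * (ξ m).1 = _
    unfold ξ
    ext i j
    fin_cases i <;> fin_cases j <;>
      simp [Matrix.mul_apply, Fin.sum_univ_two, ← Complex.exp_add] <;>
      · congr 1; push_cast; ring

lemma xi_zpow (m : ℕ) (n : ℤ) : ((ξ m ^ n : SU2) : Matrix (Fin 2) (Fin 2) ℂ)
    = !![Complex.exp (n * (2 * Real.pi * Complex.I / m)), 0; 0,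
         Complex.exp (-(n * (2 * Real.pi * Complex.I / m)))] := by
  cases n with
  | ofNat k => rw [Int.ofNat_eq_coe, zpow_natCast, xi_pow]; push_cast; ring_nf
  | negSucc k =>
    rw [zpow_negSucc, coe_inv, xi_pow]
    ext i j
    fin_cases i <;> fin_cases j <;>
      simp [Matrix.star_apply, Complex.star_def, ← Complex.exp_conj, _root_.map_mul, xi_conj m,
        Complex.conj_ofReal, map_div₀, Complex.conj_I, Int.cast_negSucc] <;>
      · congr 1; push_cast; ring

end Stmt9Aux
namespace Stmt9Aux

lemma two_pow_ne (q : ℕ) : ((2 ^ q : ℕ) : ℂ) ≠ 0 :=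
  Nat.cast_ne_zero.mpr (by positivity)

lemma xi_zpow_eq_one (q : ℕ) (n : ℤ) : ξ (2 ^ q) ^ n = 1 ↔ ((2 ^ q : ℕ) : ℤ) ∣ n := by
  constructor
  · intro h
    have h0 := congrArg (fun A : SU2 => (A : Matrix (Fin 2) (Fin 2) ℂ) 0 0) h
    simp only [xi_zpow, coe_one] at h0
    have h1 : Complex.exp (n * (2 * Real.pi * Complex.I / (2 ^ q : ℕ))) = 1 := by
      simpa using h0
    rw [Complex.exp_eq_one_iff] at h1
    obtain ⟨k, hk⟩ := h1
    refine ⟨k, ?_⟩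
    have h2 : (n : ℂ) = ((2 ^ q : ℕ) : ℂ) * k := by
      have h2q : ((2 ^ q : ℕ) : ℂ) ≠ 0 := two_pow_ne q
      have hπI : (2 : ℂ) * Real.pi * Complex.I ≠ 0 := by
        simp [Real.pi_ne_zero, Complex.I_ne_zero, Complex.ofReal_ne_zero]
      field_simp at hk
      apply mul_right_cancel₀ hπI
      rw [hk]
    exact_mod_cast h2
  · rintro ⟨k, rfl⟩
    apply Subtype.ext
    rw [xi_zpow, coe_one, Matrix.one_fin_two]
    have harg : (((((2 ^ q : ℕ) : ℤ) * k : ℤ)) : ℂ) * (2 * Real.pi * Complex.I / (2 ^ q : ℕ))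
        = k * (2 * Real.pi * Complex.I) := by
      have h2 : ((2 ^ q : ℕ) : ℂ) ≠ 0 := two_pow_ne _
      push_cast
      field_simp
    rw [harg, Complex.exp_int_mul_two_pi_mul_I, Complex.exp_neg,
      Complex.exp_int_mul_two_pi_mul_I]
    norm_num

/-- `ξ (2^q) ^ (2^(q-r)) = ξ (2^r)` for `r ≤ q`. -/
lemma xi_pow_pow (q r : ℕ) (hr : r ≤ q) : ξ (2 ^ q) ^ ((2 ^ (q - r) : ℕ) : ℤ) = ξ (2 ^ r) := by
  apply Subtype.ext
  rw [xi_zpow]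
  unfold ξ
  have harg : (((2 ^ (q - r) : ℕ) : ℤ) : ℂ) * (2 * Real.pi * Complex.I / (2 ^ q : ℕ))
      = 2 * Real.pi * Complex.I / (2 ^ r : ℕ) := by
    have : (2 ^ q : ℕ) = 2 ^ (q - r) * 2 ^ r := by
      rw [← pow_add]; congr 1; omega
    rw [this]
    have h1 : ((2 ^ (q - r) : ℕ) : ℂ) ≠ 0 := two_pow_ne _
    have h2 : ((2 ^ r : ℕ) : ℂ) ≠ 0 := two_pow_ne _
    push_cast
    field_simp
  rw [harg]

end Stmt9Aux
namespace Stmt9Aux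

lemma w_conj (m : ℕ) : w * ξ m * w⁻¹ = (ξ m)⁻¹ := by
  apply Subtype.ext
  rw [coe_mul, coe_mul, coe_inv, coe_inv]
  show w.1 * (ξ m).1 * star w.1 = star (ξ m).1
  unfold w ξ
  ext i j
  fin_cases i <;> fin_cases j <;>
    simp [Matrix.mul_apply, Fin.sum_univ_two, Matrix.star_apply, Complex.star_def,
      xi_conj_exp m, xi_conj_exp' m]

lemma w_conj_zpow (m : ℕ) (n : ℤ) : w * ξ m ^ n * w⁻¹ = ξ m ^ (-n) := by
  rw [← conj_zpow, w_conj, _root_.inv_zpow, _root_.zpow_neg]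

lemma xi_zpow_mul_w (m : ℕ) (n : ℤ) : ξ m ^ n * w = w * ξ m ^ (-n) := by
  have := w_conj_zpow m (-n)
  rw [neg_neg] at this
  rw [← this]
  group

lemma w_sq (q : ℕ) (hq : 1 ≤ q) : w * w = ξ (2 ^ q) ^ ((2 ^ (q - 1) : ℕ) : ℤ) := by
  apply Subtype.ext
  rw [coe_mul, xi_zpow]
  have harg : (((2 ^ (q - 1) : ℕ) : ℤ) : ℂ) * (2 * Real.pi * Complex.I / ((2 ^ q : ℕ) : ℂ))
      = Real.pi * Complex.I := by
    have h2q : ((2 ^ q : ℕ) : ℂ) ≠ 0 := two_pow_ne q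
    have hq2 : (2 ^ q : ℕ) = 2 * 2 ^ (q - 1) := by
      rw [← pow_succ']; congr 1; omega
    rw [hq2]
    push_cast
    have h1 : (2 : ℂ) ^ (q - 1) ≠ 0 := pow_ne_zero _ two_ne_zero
    field_simp
  rw [harg]
  show w.1 * w.1 = _
  unfold w
  ext i j
  fin_cases i <;> fin_cases j <;>
    simp [Matrix.mul_apply, Fin.sum_univ_two, Complex.exp_pi_mul_I, Complex.exp_neg] <;> norm_num

end Stmt9Aux
namespace Stmt9Aux

lemma w_mul_xi (m : ℕ) (n : ℤ) : w * ξ m ^ n = ξ m ^ (-n) * w := by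
  have h := xi_zpow_mul_w m (-n)
  rw [neg_neg] at h
  exact h.symm

lemma prod_anti (q : ℕ) (hq : 1 ≤ q) (m n : ℤ) :
    (w * ξ (2 ^ q) ^ m) * (w * ξ (2 ^ q) ^ n)
      = ξ (2 ^ q) ^ (((2 ^ (q - 1) : ℕ) : ℤ) + (-m + n)) := by
  calc (w * ξ (2 ^ q) ^ m) * (w * ξ (2 ^ q) ^ n)
      = w * (ξ (2 ^ q) ^ m * w) * ξ (2 ^ q) ^ n := by group
    _ = w * (w * ξ (2 ^ q) ^ (-m)) * ξ (2 ^ q) ^ n := by rw [xi_zpow_mul_w]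
    _ = (w * w) * (ξ (2 ^ q) ^ (-m) * ξ (2 ^ q) ^ n) := by group
    _ = _ := by rw [w_sq q hq, ← _root_.zpow_add, ← _root_.zpow_add]

lemma mixed_prod (q : ℕ) (m n : ℤ) :
    ξ (2 ^ q) ^ m * (w * ξ (2 ^ q) ^ n) = w * ξ (2 ^ q) ^ (-m + n) := by
  calc ξ (2 ^ q) ^ m * (w * ξ (2 ^ q) ^ n)
      = (ξ (2 ^ q) ^ m * w) * ξ (2 ^ q) ^ n := by group
    _ = (w * ξ (2 ^ q) ^ (-m)) * ξ (2 ^ q) ^ n := by rw [xi_zpow_mul_w]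
    _ = _ := by rw [mul_assoc, ← _root_.zpow_add]

lemma genQ_struct (q : ℕ) (hq : 1 ≤ q) {x : SU2} (hx : x ∈ genQ q) :
    (∃ n : ℤ, x = ξ (2 ^ q) ^ n) ∨ (∃ n : ℤ, x = w * ξ (2 ^ q) ^ n) := by
  induction hx using Subgroup.closure_induction with
  | mem y hy =>
    rcases hy with rfl | rfl
    · exact Or.inl ⟨1, (zpow_one _).symm⟩
    · exact Or.inr ⟨0, by simp⟩
  | one => exact Or.inl ⟨0, (zpow_zero _).symm⟩
  | mul y z hy hz ihy ihz =>
    rcases ihy with ⟨m, rfl⟩ | ⟨m, rfl⟩ <;> rcases ihz with ⟨n, rfl⟩ | ⟨n, rfl⟩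
    · exact Or.inl ⟨m + n, (_root_.zpow_add _ _ _).symm⟩
    · exact Or.inr ⟨-m + n, (mixed_prod q m n)⟩
    · exact Or.inr ⟨m + n, by rw [mul_assoc, ← _root_.zpow_add]⟩
    · exact Or.inl ⟨((2 ^ (q - 1) : ℕ) : ℤ) + (-m + n), prod_anti q hq m n⟩
  | inv y hy ihy =>
    rcases ihy with ⟨n, rfl⟩ | ⟨n, rfl⟩
    · exact Or.inl ⟨-n, by rw [← _root_.zpow_neg]⟩
    · refine Or.inr ⟨n + (2 ^ (q - 1) : ℕ), ?_⟩
      rw [inv_eq_iff_mul_eq_one, prod_anti q hq]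
      rw [xi_zpow_eq_one]
      refine ⟨1, ?_⟩
      have : (2 ^ q : ℕ) = 2 ^ (q - 1) + 2 ^ (q - 1) := by
        rw [← two_mul, ← pow_succ']; congr 1; omega
      push_cast [this]
      ring

lemma isComm_of_le_zpowers (K : Subgroup SU2) (g : SU2) (h : K ≤ Subgroup.zpowers g) :
    IsMulCommutative K := by
  constructor
  constructor
  intro a b
  apply Subtype.ext
  obtain ⟨m, hm⟩ := Subgroup.mem_zpowers_iff.mp (h a.2)
  obtain ⟨n, hn⟩ := Subgroup.mem_zpowers_iff.mp (h b.2)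
  show (a : SU2) * b = (b : SU2) * a
  rw [← hm, ← hn, ← _root_.zpow_add, ← _root_.zpow_add, add_comm]

end Stmt9Aux
namespace Stmt9Aux

def expSet (q : ℕ) (K : Subgroup SU2) : AddSubgroup ℤ where
  carrier := {n : ℤ | ξ (2 ^ q) ^ n ∈ K}
  zero_mem' := by
    show ξ (2 ^ q) ^ (0 : ℤ) ∈ K
    rw [zpow_zero]; exact K.one_mem
  add_mem' := by
    intro a b ha hb
    show ξ (2 ^ q) ^ (a + b) ∈ K
    rw [_root_.zpow_add]
    exact K.mul_mem ha hb
  neg_mem' := by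
    intro a ha
    show ξ (2 ^ q) ^ (-a) ∈ K
    rw [_root_.zpow_neg]
    exact K.inv_mem ha

lemma mem_expSet {q : ℕ} {K : Subgroup SU2} {n : ℤ} :
    n ∈ expSet q K ↔ ξ (2 ^ q) ^ n ∈ K := Iff.rfl

end Stmt9Aux

/-- For `q ≥ 2`, every non-commutative subgroup of `Q_{2^{q+1}}` is generated by `ξ_{2^r}` and
`w ξ_{2^q}^p` for some `2 ≤ r ≤ q` and `0 ≤ p < 2^{q-r}`. -/
theorem stmt9 (q : ℕ) (hq : 2 ≤ q) (K : Subgroup SU2) (hK : K ≤ genQ q)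
    (hc : ¬ IsMulCommutative K) :
    ∃ r p : ℕ, 2 ≤ r ∧ r ≤ q ∧ p < 2 ^ (q - r) ∧
      K = Subgroup.closure {ξ (2 ^ r), w * (ξ (2 ^ q)) ^ p} := by
  classical
  open Stmt9Aux in
  have hq1 : 1 ≤ q := by omega
  -- step 1: K contains an anti-diagonal element
  have hwK : ∃ s : ℤ, w * ξ (2 ^ q) ^ s ∈ K := by
    by_contra hno
    push_neg at hno
    apply hc
    apply isComm_of_le_zpowers K (ξ (2 ^ q))
    intro x hx
    rcases genQ_struct q hq1 (hK hx) with ⟨n, rfl⟩ | ⟨n, rfl⟩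
    · exact Subgroup.mem_zpowers_iff.mpr ⟨n, rfl⟩
    · exact absurd hx (hno n)
  obtain ⟨s, hs⟩ := hwK
  set u : SU2 := w * ξ (2 ^ q) ^ s with hu
  have husq : u * u = ξ (2 ^ q) ^ ((2 ^ (q - 1) : ℕ) : ℤ) := by
    rw [hu, prod_anti q hq1]
    congr 1
    ring
  set S := Stmt9Aux.expSet q K with hS
  obtain ⟨a, hSa⟩ := Int.subgroup_cyclic S
  have hmemS : ∀ n : ℤ, n ∈ S ↔ a ∣ n := by
    intro n
    rw [hSa, AddSubgroup.mem_closure_singleton]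
    constructor
    · rintro ⟨k, rfl⟩
      rw [smul_eq_mul]
      exact dvd_mul_left a k
    · rintro ⟨k, rfl⟩
      exact ⟨k, by rw [smul_eq_mul, mul_comm]⟩
  have hSq : ((2 ^ q : ℕ) : ℤ) ∈ S := by
    rw [hS, mem_expSet, (xi_zpow_eq_one q _).mpr dvd_rfl]
    exact K.one_mem
  have hSq1 : ((2 ^ (q - 1) : ℕ) : ℤ) ∈ S := by
    rw [hS, mem_expSet, ← husq]
    exact K.mul_mem hs hs
  -- the generator is ± a power of two
  have hadvd : a.natAbs ∣ 2 ^ q := by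
    have h := Int.natAbs_dvd_natAbs.mpr ((hmemS _).mp hSq)
    rwa [Int.natAbs_natCast] at h
  obtain ⟨j, hjq, hja⟩ := (Nat.dvd_prime_pow Nat.prime_two).mp hadvd
  have hmem2 : ∀ n : ℤ, n ∈ S ↔ ((2 ^ j : ℕ) : ℤ) ∣ n := by
    intro n
    rw [hmemS n, ← Int.natAbs_dvd, hja]
  have hjq1 : j ≤ q - 1 := by
    have h1 : ((2 ^ j : ℕ) : ℤ) ∣ ((2 ^ (q - 1) : ℕ) : ℤ) := (hmem2 _).mp hSq1
    have h2 : (2 ^ j : ℕ) ∣ 2 ^ (q - 1) := by exact_mod_cast h1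
    exact (Nat.pow_dvd_pow_iff_le_right (by norm_num : (1:ℕ) < 2)).mp h2
  -- step 2: j ≤ q - 2, else K is commutative
  have hj2 : j ≤ q - 2 := by
    by_contra hj2
    apply hc
    apply isComm_of_le_zpowers K u
    intro x hx
    rcases genQ_struct q hq1 (hK hx) with ⟨n, rfl⟩ | ⟨n, rfl⟩
    · obtain ⟨m, hm⟩ := (hmem2 n).mp hx
      refine Subgroup.mem_zpowers_iff.mpr ⟨2 * m, ?_⟩
      rw [_root_.zpow_mul, show u ^ (2:ℤ) = u * u from by rw [show (2:ℤ) = 1+1 from rfl, _root_.zpow_add, zpow_one], husq, ← _root_.zpow_mul]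
      congr 1
      rw [hm]
      have : j = q - 1 := by omega
      rw [this]
    · have h4 : w * ξ (2 ^ q) ^ n = u * ξ (2 ^ q) ^ (n - s) := by
        rw [hu, mul_assoc, ← _root_.zpow_add, show s + (n - s) = n from by ring]
      have h5 := K.mul_mem (K.inv_mem hs) hx
      rw [h4, inv_mul_cancel_left] at h5
      obtain ⟨m, hm⟩ := (hmem2 (n - s)).mp h5
      refine Subgroup.mem_zpowers_iff.mpr ⟨1 + 2 * m, ?_⟩
      rw [_root_.zpow_add, zpow_one, _root_.zpow_mul, show u ^ (2:ℤ) = u * u from by rw [show (2:ℤ) = 1+1 from rfl, _root_.zpow_add, zpow_one], husq,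
        ← _root_.zpow_mul, h4]
      congr 2
      rw [hm]
      have : j = q - 1 := by omega
      rw [this]
  -- set up r and p
  set N : ℕ := 2 ^ j with hN
  have hNpos : (0:ℤ) < (N : ℤ) := by positivity
  set p : ℕ := (s % (N : ℤ)).toNat with hp
  have hPmod : (p : ℤ) = s % (N : ℤ) := Int.toNat_of_nonneg (Int.emod_nonneg s (by omega))
  have hplt : p < N := by
    have h1 : s % (N : ℤ) < (N : ℤ) := Int.emod_lt_of_pos s hNpos
    omega
  have hdvd_sp : ((N : ℕ) : ℤ) ∣ s - (p : ℤ) := by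
    rw [hPmod, Int.emod_def]
    exact ⟨s / (N : ℤ), by ring⟩
  have hxi : ξ (2 ^ q) ^ ((N : ℕ) : ℤ) = ξ (2 ^ (q - j)) := by
    have h := xi_pow_pow q (q - j) (by omega)
    rwa [show q - (q - j) = j from by omega] at h
  have hgen1 : ξ (2 ^ (q - j)) ∈ K := by
    rw [← hxi]
    exact (hmem2 _).mpr dvd_rfl
  have hwp : w * ξ (2 ^ q) ^ ((p : ℕ) : ℤ) ∈ K := by
    have h4 : w * ξ (2 ^ q) ^ ((p : ℕ) : ℤ) = u * ξ (2 ^ q) ^ ((p : ℤ) - s) := by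
      rw [hu, mul_assoc, ← _root_.zpow_add, show s + ((p:ℤ) - s) = (p:ℤ) from by ring]
    rw [h4]
    refine K.mul_mem hs ?_
    refine (hmem2 _).mpr ?_
    rw [show (p:ℤ) - s = -(s - (p:ℤ)) from by ring]
    exact dvd_neg.mpr hdvd_sp
  refine ⟨q - j, p, by omega, by omega, ?_, ?_⟩
  · rwa [show q - (q - j) = j from by omega]
  · apply le_antisymm
    · intro x hx
      rcases genQ_struct q hq1 (hK hx) with ⟨n, rfl⟩ | ⟨n, rfl⟩
      · obtain ⟨m, hm⟩ := (hmem2 n).mp hx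
        rw [hm, _root_.zpow_mul, hxi]
        exact Subgroup.zpow_mem _ (Subgroup.subset_closure (Set.mem_insert _ _)) m
      · have h4 : w * ξ (2 ^ q) ^ n = u * ξ (2 ^ q) ^ (n - s) := by
          rw [hu, mul_assoc, ← _root_.zpow_add, show s + (n - s) = n from by ring]
        have h5 := K.mul_mem (K.inv_mem hs) hx
        rw [h4, inv_mul_cancel_left] at h5
        obtain ⟨m, hm⟩ := (hmem2 (n - s)).mp h5
        have hdvd_np : ((N : ℕ) : ℤ) ∣ n - (p : ℤ) := by
          have : n - (p : ℤ) = (n - s) + (s - (p : ℤ)) := by ring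
          rw [this, hm]
          exact dvd_add ⟨m, rfl⟩ hdvd_sp
        obtain ⟨m', hm'⟩ := hdvd_np
        have h6 : w * ξ (2 ^ q) ^ n
            = (w * (ξ (2 ^ q)) ^ (p : ℕ)) * ξ (2 ^ (q - j)) ^ m' := by
          rw [← zpow_natCast (ξ (2 ^ q)) p, mul_assoc, ← hxi, ← _root_.zpow_mul, ← _root_.zpow_add,
            show ((p:ℤ)) + (N:ℤ) * m' = n from by omega]
        rw [h6]
        exact Subgroup.mul_mem _
          (Subgroup.subset_closure (Set.mem_insert_of_mem _ rfl))
          (Subgroup.zpow_mem _ (Subgroup.subset_closure (Set.mem_insert _ _)) m')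
    · rw [Subgroup.closure_le]
      rintro y (rfl | rfl)
      · exact hgen1
      · rw [zpow_natCast] at hwp
        exact hwp

end
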